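/- There is no bishop Latin square of order 5: no 5×5 Latin square in which every cell has another cell on a common diagonal containing the same value. -/
import Mathlib

/-- An `n × n` Latin square with entries in `{1, …, n}`. -/
def latin (n : ℕ) (M : Fin n → Fin n → ℕ) : Prop :=
  (∀ i j, M i j ∈ Finset.Icc 1 n) ∧
  (∀ i, Function.Injective fun j => M i j) ∧
  (∀ j, Function.Injective fun i => M i j)

/-- Two cells are orthogonally adjacent. -/
def orthAdj (n : ℕ) (p q : Fin n × Fin n) : Prop :=
  (p.1 = q.1 ∧ (p.2.val + 1 = q.2.val ∨ q.2.val + 1 = p.2.val)) ∨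
  (p.2 = q.2 ∧ (p.1.val + 1 = q.1.val ∨ q.1.val + 1 = p.1.val))

/-- Two cells are a king's move apart (orthogonally or diagonally adjacent). -/
def kingAdj (n : ℕ) (p q : Fin n × Fin n) : Prop :=
  p ≠ q ∧ ((p.1.val : ℤ) - q.1.val).natAbs ≤ 1 ∧ ((p.2.val : ℤ) - q.2.val).natAbs ≤ 1

/-- Two cells are a knight's move apart. -/
def knightAdj (n : ℕ) (p q : Fin n × Fin n) : Prop :=
  (((p.1.val : ℤ) - q.1.val).natAbs = 1 ∧ ((p.2.val : ℤ) - q.2.val).natAbs = 2) ∨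
  (((p.1.val : ℤ) - q.1.val).natAbs = 2 ∧ ((p.2.val : ℤ) - q.2.val).natAbs = 1)

/-- Two cells are a bishop's move apart: on a common diagonal, at nonzero distance. -/
def bishopMove (n : ℕ) (p q : Fin n × Fin n) : Prop :=
  ((p.1.val : ℤ) - q.1.val).natAbs = ((p.2.val : ℤ) - q.2.val).natAbs ∧ p.1 ≠ q.1

/-- Two cells are orthogonally adjacent on the torus (wrapping around). -/
def torAdj (n : ℕ) (p q : Fin n × Fin n) : Prop :=
  p ≠ q ∧
    ((p.1 = q.1 ∧ ((p.2.val + 1) % n = q.2.val ∨ (q.2.val + 1) % n = p.2.val)) ∨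
     (p.2 = q.2 ∧ ((p.1.val + 1) % n = q.1.val ∨ (q.1.val + 1) % n = p.1.val)))

/-- Two values differ by exactly 1. -/
def diffOne (a b : ℕ) : Prop := ((a : ℤ) - (b : ℤ)).natAbs = 1

/- ## Auxiliary machinery -/

/-- `i`-th base-5 digit of `e`. -/
def dgt (e i : ℕ) : ℕ := e / 5 ^ i % 5

/-- `e` encodes an injective map `Fin 5 → Fin 5` that is "diagonally matched". -/
def matchedE (e : ℕ) : Prop :=
  (∀ i ∈ Finset.range 5, ∀ j ∈ Finset.range 5, i ≠ j → dgt e i ≠ dgt e j) ∧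
  (∀ i ∈ Finset.range 5, ∃ j ∈ Finset.range 5, j ≠ i ∧
     (i + dgt e i = j + dgt e j ∨ i + dgt e j = j + dgt e i))

instance : DecidablePred matchedE := fun e => by unfold matchedE; infer_instance

def disjE (a b : ℕ) : Prop := ∀ i ∈ Finset.range 5, dgt a i ≠ dgt b i

instance : ∀ a b, Decidable (disjE a b) := fun a b => by unfold disjE; infer_instance

def mS : Finset ℕ := (Finset.range 3125).filter matchedE

set_option maxHeartbeats 4000000 in
set_option maxRecDepth 10000 in
theorem keyLemma : ∀ a ∈ mS, ∀ b ∈ mS, disjE a b → ∀ c ∈ mS, disjE a c → disjE b c →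
    ∀ e ∈ mS, ¬(disjE a e ∧ disjE b e ∧ disjE c e) := by decide

/-- Encode a map `Fin 5 → Fin 5` as a natural number. -/
def enc (c : Fin 5 → Fin 5) : ℕ :=
  (c 0).val + 5 * (c 1).val + 25 * (c 2).val + 125 * (c 3).val + 625 * (c 4).val

lemma enc_dgt (c : Fin 5 → Fin 5) (i : Fin 5) : dgt (enc c) i.val = (c i).val := by
  have h0 := (c 0).isLt; have h1 := (c 1).isLt; have h2 := (c 2).isLt
  have h3 := (c 3).isLt; have h4 := (c 4).isLt
  have d0 : dgt (enc c) 0 = (c 0).val := by simp only [dgt, enc]; norm_num; omega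
  have d1 : dgt (enc c) 1 = (c 1).val := by simp only [dgt, enc]; norm_num; omega
  have d2 : dgt (enc c) 2 = (c 2).val := by simp only [dgt, enc]; norm_num; omega
  have d3 : dgt (enc c) 3 = (c 3).val := by simp only [dgt, enc]; norm_num; omega
  have d4 : dgt (enc c) 4 = (c 4).val := by simp only [dgt, enc]; norm_num; omega
  fin_cases i
  exacts [d0, d1, d2, d3, d4]

lemma enc_lt (c : Fin 5 → Fin 5) : enc c < 3125 := by
  have h0 := (c 0).isLt; have h1 := (c 1).isLt; have h2 := (c 2).isLt
  have h3 := (c 3).isLt; have h4 := (c 4).isLt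
  simp only [enc]; omega

lemma enc_mem (c : Fin 5 → Fin 5) (hinj : Function.Injective c)
    (hm : ∀ i : Fin 5, ∃ j : Fin 5, j ≠ i ∧
      (i.val + (c i).val = j.val + (c j).val ∨ i.val + (c j).val = j.val + (c i).val)) :
    enc c ∈ mS := by
  rw [mS, Finset.mem_filter]
  refine ⟨Finset.mem_range.mpr (enc_lt c), ?_, ?_⟩
  · intro i hi j hj hij
    rw [Finset.mem_range] at hi hj
    rw [show i = (⟨i, hi⟩ : Fin 5).val from rfl, show j = (⟨j, hj⟩ : Fin 5).val from rfl,
      enc_dgt, enc_dgt]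
    intro h
    exact hij (Fin.mk.injEq .. ▸ (hinj (Fin.ext h) : (⟨i, hi⟩ : Fin 5) = ⟨j, hj⟩))
  · intro i hi
    rw [Finset.mem_range] at hi
    obtain ⟨j, hji, hd⟩ := hm ⟨i, hi⟩
    refine ⟨j.val, Finset.mem_range.mpr j.isLt, fun h => hji (Fin.ext h), ?_⟩
    rw [show i = (⟨i, hi⟩ : Fin 5).val from rfl, enc_dgt,
      show j.val = (⟨j.val, j.isLt⟩ : Fin 5).val from rfl, enc_dgt]
    simpa using hd

lemma enc_disj (c c' : Fin 5 → Fin 5) (h : ∀ i, c i ≠ c' i) : disjE (enc c) (enc c') := by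
  intro i hi
  rw [Finset.mem_range] at hi
  rw [show i = (⟨i, hi⟩ : Fin 5).val from rfl, enc_dgt, enc_dgt]
  exact fun he => h ⟨i, hi⟩ (Fin.ext he)

/-- There is no bishop Latin square of order 5. -/
theorem stmt19 :
    ¬ ∃ M : Fin 5 → Fin 5 → ℕ, latin 5 M ∧
      ∀ p : Fin 5 × Fin 5, ∃ q : Fin 5 × Fin 5,
        bishopMove 5 p q ∧ M q.1 q.2 = M p.1 p.2 := by
  rintro ⟨M, ⟨hIcc, hrow, hcol⟩, hB⟩
  -- each value 1..5 appears in each row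
  have hex : ∀ (i : Fin 5) (v : ℕ), v ∈ Finset.Icc 1 5 → ∃ j, M i j = v := by
    intro i v hv
    have himg : Finset.image (fun j => M i j) Finset.univ = Finset.Icc 1 5 := by
      apply Finset.eq_of_subset_of_card_le
      · intro x hx
        obtain ⟨j, _, hj⟩ := Finset.mem_image.mp hx
        exact hj ▸ hIcc i j
      · rw [Finset.card_image_of_injective _ (hrow i)]
        simp
    have := himg ▸ hv
    obtain ⟨j, _, hj⟩ := Finset.mem_image.mp this
    exact ⟨j, hj⟩
  -- column functions for each value
  have hc : ∀ v ∈ Finset.Icc 1 5, ∃ c : Fin 5 → Fin 5, ∀ i, M i (c i) = v := by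
    intro v hv
    exact ⟨fun i => (hex i v hv).choose, fun i => (hex i v hv).choose_spec⟩
  -- generic properties
  have hinj : ∀ (c : Fin 5 → Fin 5) (v : ℕ), (∀ i, M i (c i) = v) → Function.Injective c := by
    intro c v hcv i i' h
    apply hcol (c i)
    show M i (c i) = M i' (c i)
    rw [hcv i, h, hcv i']
  have hmat : ∀ (c : Fin 5 → Fin 5) (v : ℕ), (∀ i, M i (c i) = v) →
      ∀ i : Fin 5, ∃ j : Fin 5, j ≠ i ∧
        (i.val + (c i).val = j.val + (c j).val ∨ i.val + (c j).val = j.val + (c i).val) := by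
    intro c v hcv i
    obtain ⟨q, ⟨hdiag, hne⟩, hval⟩ := hB (i, c i)
    have hq2 : q.2 = c q.1 := by
      apply hrow q.1
      show M q.1 q.2 = M q.1 (c q.1)
      rw [hval, hcv q.1]
      exact hcv i
    refine ⟨q.1, fun h => hne (h ▸ rfl), ?_⟩
    rw [hq2] at hdiag
    simp only at hdiag
    omega
  have hdisj : ∀ (c c' : Fin 5 → Fin 5) (v v' : ℕ), (∀ i, M i (c i) = v) →
      (∀ i, M i (c' i) = v') → v ≠ v' → ∀ i, c i ≠ c' i := by
    intro c c' v v' hcv hcv' hvv i h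
    exact hvv (by rw [← hcv i, h, hcv' i])
  -- instantiate at values 1,2,3,4
  obtain ⟨c1, h1⟩ := hc 1 (by decide)
  obtain ⟨c2, h2⟩ := hc 2 (by decide)
  obtain ⟨c3, h3⟩ := hc 3 (by decide)
  obtain ⟨c4, h4⟩ := hc 4 (by decide)
  exact keyLemma (enc c1) (enc_mem c1 (hinj c1 1 h1) (hmat c1 1 h1))
    (enc c2) (enc_mem c2 (hinj c2 2 h2) (hmat c2 2 h2))
    (enc_disj c1 c2 (hdisj c1 c2 1 2 h1 h2 (by norm_num)))
    (enc c3) (enc_mem c3 (hinj c3 3 h3) (hmat c3 3 h3))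
    (enc_disj c1 c3 (hdisj c1 c3 1 3 h1 h3 (by norm_num)))
    (enc_disj c2 c3 (hdisj c2 c3 2 3 h2 h3 (by norm_num)))
    (enc c4) (enc_mem c4 (hinj c4 4 h4) (hmat c4 4 h4))
    ⟨enc_disj c1 c4 (hdisj c1 c4 1 4 h1 h4 (by norm_num)),
     enc_disj c2 c4 (hdisj c2 c4 2 4 h2 h4 (by norm_num)),
     enc_disj c3 c4 (hdisj c3 c4 3 4 h3 h4 (by norm_num))⟩
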